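/- Suppose N ≠ ∅ and C ∪ L ≠ ∅. Define x* by x*_j = (β_j / ∑_{m∈L∪C} β_m) · R for all j ∈ C, and x*_{ij} = (β_j / ∑_{m∈L∪C} β_m) · R · exp(α_i / (1 + ∑_{k∈L} β_k)) / (∑_{m∈N} exp(α_m / (1 + ∑_{k∈L} β_k))) for all i ∈ N and all j ∈ L. Then x* is a feasible budget allocation and for every feasible budget allocation x one has P(x*) ≤ P(x); that is, x* is a (global) optimal budget allocation of the problem min_{x∈𝒳} P(x). -/

import Mathlib

open Real Finset

/-- The function `B(x) = ∑_{i∈N} exp(α_i) / (∏_{j∈L} x_{ij}^{β_j} · ∏_{j∈C} x_j^{β_j})`. -/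
noncomputable def Bfun {N L C : Type*} [Fintype N] [Fintype L] [Fintype C]
    (α : N → ℝ) (β : L ⊕ C → ℝ) (x : (N → L → ℝ) × (C → ℝ)) : ℝ :=
  ∑ i : N, Real.exp (α i) /
    ((∏ j : L, x.1 i j ^ β (Sum.inl j)) * ∏ j : C, x.2 j ^ β (Sum.inr j))

/-- The overall pickpocket probability `P(x) = B(x) / (1 + B(x))`. -/
noncomputable def Pfun {N L C : Type*} [Fintype N] [Fintype L] [Fintype C]
    (α : N → ℝ) (β : L ⊕ C → ℝ) (x : (N → L → ℝ) × (C → ℝ)) : ℝ :=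
  Bfun α β x / (1 + Bfun α β x)

/-- A budget allocation has all entries strictly positive. -/
def PosAlloc {N L C : Type*} (x : (N → L → ℝ) × (C → ℝ)) : Prop :=
  (∀ i j, 0 < x.1 i j) ∧ ∀ j, 0 < x.2 j

/-- A budget allocation is feasible: positive entries, total spend at most `R`. -/
def FeasAlloc {N L C : Type*} [Fintype N] [Fintype L] [Fintype C]
    (R : ℝ) (x : (N → L → ℝ) × (C → ℝ)) : Prop :=
  PosAlloc x ∧ (∑ i : N, ∑ j : L, x.1 i j) + ∑ j : C, x.2 j ≤ R

/-- The candidate optimal budget allocation `x*`. -/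
noncomputable def xstar {N L C : Type*} [Fintype N] [Fintype L] [Fintype C]
    (R : ℝ) (α : N → ℝ) (β : L ⊕ C → ℝ) : (N → L → ℝ) × (C → ℝ) :=
  (fun i j => β (Sum.inl j) / (∑ m : L ⊕ C, β m) * R *
      (Real.exp (α i / (1 + ∑ k : L, β (Sum.inl k))) /
        ∑ m : N, Real.exp (α m / (1 + ∑ k : L, β (Sum.inl k)))),
   fun j => β (Sum.inr j) / (∑ m : L ⊕ C, β m) * R)

private lemma cancel_aux {u t y : ℝ} (hu : u ≠ 0) (ht : t ≠ 0) :
    u / t * (y * t / u) = y := by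
  field_simp

private lemma prod_rpow_const {ι : Type*} [Fintype ι] {b : ℝ} (hb : 0 < b) (f : ι → ℝ) :
    ∏ i : ι, b ^ f i = b ^ (∑ i : ι, f i) := by
  simp only [Real.rpow_def_of_pos hb]
  rw [← Real.exp_sum, ← Finset.mul_sum]

section main

variable {N L C : Type*} [Fintype N] [Fintype L] [Fintype C]
  [Nonempty N] [Nonempty (L ⊕ C)]

private lemma xstar_feas (R : ℝ) (hR : 0 < R) (α : N → ℝ)
    (β : L ⊕ C → ℝ) (hβ : ∀ j, 0 < β j) : FeasAlloc R (xstar R α β) := by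
  have hs0 : 0 < ∑ m : L ⊕ C, β m := Finset.sum_pos (fun j _ => hβ j) univ_nonempty
  have hW : 0 < ∑ m : N, Real.exp (α m / (1 + ∑ k : L, β (Sum.inl k))) :=
    Finset.sum_pos (fun m _ => Real.exp_pos _) univ_nonempty
  refine ⟨⟨fun i j => ?_, fun j => ?_⟩, ?_⟩
  · simp only [xstar]
    have := hβ (Sum.inl j)
    positivity
  · simp only [xstar]
    have := hβ (Sum.inr j)
    positivity
  · simp only [xstar]
    rw [Finset.sum_comm]
    simp only [← Finset.mul_sum, ← Finset.sum_div, div_self hW.ne', mul_one]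
    rw [← Fintype.sum_sum_type (fun j => β j / (∑ m : L ⊕ C, β m) * R)]
    rw [← Finset.sum_mul, ← Finset.sum_div, div_self hs0.ne', one_mul]

private lemma xstar_value (R : ℝ) (hR : 0 < R) (α : N → ℝ)
    (β : L ⊕ C → ℝ) (hβ : ∀ j, 0 < β j) :
    Bfun α β (xstar R α β) =
      (∑ m : N, Real.exp (α m / (1 + ∑ k : L, β (Sum.inl k)))) ^
          (1 + ∑ k : L, β (Sum.inl k)) /
        ∏ j : L ⊕ C, (β j / (∑ m : L ⊕ C, β m) * R) ^ β j := by
  have hs0 : 0 < ∑ m : L ⊕ C, β m := Finset.sum_pos (fun j _ => hβ j) univ_nonempty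
  set s0 := ∑ m : L ⊕ C, β m with hs0def
  set bL := ∑ k : L, β (Sum.inl k) with hbLdef
  have hbL : 0 ≤ bL := Finset.sum_nonneg fun k _ => (hβ _).le
  set τ := 1 + bL with hτdef
  have hτ : 0 < τ := by linarith
  have hW : 0 < ∑ m : N, Real.exp (α m / τ) :=
    Finset.sum_pos (fun m _ => Real.exp_pos _) univ_nonempty
  set W := ∑ m : N, Real.exp (α m / τ) with hWdef
  have hc : ∀ j, 0 < β j / s0 * R := fun j => by have := hβ j; positivity
  set c : L ⊕ C → ℝ := fun j => β j / s0 * R with hcdef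
  have hDL : 0 < ∏ j : L, c (Sum.inl j) ^ β (Sum.inl j) :=
    Finset.prod_pos fun j _ => Real.rpow_pos_of_pos (hc _) _
  have hDC : 0 < ∏ j : C, c (Sum.inr j) ^ β (Sum.inr j) :=
    Finset.prod_pos fun j _ => Real.rpow_pos_of_pos (hc _) _
  set DL := ∏ j : L, c (Sum.inl j) ^ β (Sum.inl j) with hDLdef
  set DC := ∏ j : C, c (Sum.inr j) ^ β (Sum.inr j) with hDCdef
  have hD : (∏ j : L ⊕ C, c j ^ β j) = DL * DC := Fintype.prod_sum_type _
  simp only [Bfun, xstar, ← hs0def, ← hbLdef, ← hτdef, ← hWdef]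
  have hcj : ∀ j, β j / s0 * R = c j := fun _ => rfl
  simp only [hcj]
  have hwpos : ∀ i : N, 0 < Real.exp (α i / τ) / W := fun i => div_pos (Real.exp_pos _) hW
  have hprodL : ∀ i : N, (∏ j : L, (c (Sum.inl j) * (Real.exp (α i / τ) / W)) ^ β (Sum.inl j))
      = DL * (Real.exp (α i / τ) / W) ^ bL := by
    intro i
    rw [hbLdef, ← prod_rpow_const (hwpos i), hDLdef, ← Finset.prod_mul_distrib]
    exact Finset.prod_congr rfl fun j _ => Real.mul_rpow (hc _).le (hwpos i).le
  have hterm : ∀ i : N, Real.exp (α i) / ((DL * (Real.exp (α i / τ) / W) ^ bL) * DC)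
      = Real.exp (α i / τ) * W ^ bL / (DL * DC) := by
    intro i
    have hWbL : (0:ℝ) < W ^ bL := Real.rpow_pos_of_pos hW _
    rw [Real.div_rpow (Real.exp_pos _).le hW.le, ← Real.exp_mul]
    have hkey : Real.exp (α i / τ) * Real.exp (α i / τ * bL) = Real.exp (α i) := by
      rw [← Real.exp_add]
      congr 1
      field_simp
      ring
    rw [← hkey]
    field_simp
  simp only [hprodL, ← hDCdef, hterm]
  rw [← Finset.sum_div, ← Finset.sum_mul, ← hWdef, hτdef, Real.rpow_add hW, Real.rpow_one, hD]

set_option maxHeartbeats 1000000 in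
private lemma lower_bound (R : ℝ) (hR : 0 < R) (α : N → ℝ)
    (β : L ⊕ C → ℝ) (hβ : ∀ j, 0 < β j)
    (x : (N → L → ℝ) × (C → ℝ)) (hx : FeasAlloc R x) :
    (∑ m : N, Real.exp (α m / (1 + ∑ k : L, β (Sum.inl k)))) ^
          (1 + ∑ k : L, β (Sum.inl k)) /
        ∏ j : L ⊕ C, (β j / (∑ m : L ⊕ C, β m) * R) ^ β j ≤ Bfun α β x := by
  obtain ⟨⟨hx1, hx2⟩, hbudget⟩ := hx
  have hs0 : 0 < ∑ m : L ⊕ C, β m := Finset.sum_pos (fun j _ => hβ j) univ_nonempty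
  set s0 := ∑ m : L ⊕ C, β m with hs0def
  set bL := ∑ k : L, β (Sum.inl k) with hbLdef
  have hbL : 0 ≤ bL := Finset.sum_nonneg fun k _ => (hβ _).le
  set bC := ∑ k : C, β (Sum.inr k) with hbCdef
  have hbC : 0 ≤ bC := Finset.sum_nonneg fun k _ => (hβ _).le
  have hsplit : s0 = bL + bC := Fintype.sum_sum_type _
  set τ := 1 + bL with hτdef
  have hτ : 0 < τ := by linarith
  have hW : 0 < ∑ m : N, Real.exp (α m / τ) :=
    Finset.sum_pos (fun m _ => Real.exp_pos _) univ_nonempty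
  set W := ∑ m : N, Real.exp (α m / τ) with hWdef
  set w : N → ℝ := fun i => Real.exp (α i / τ) / W with hwdef
  have hw : ∀ i, 0 < w i := fun i => div_pos (Real.exp_pos _) hW
  have hsw : ∑ i : N, w i = 1 := by
    simp only [hwdef]
    rw [← Finset.sum_div, ← hWdef, div_self hW.ne']
  -- components
  set P : N → ℝ := fun i => ∏ j : L, x.1 i j ^ β (Sum.inl j) with hPdef
  have hP : ∀ i, 0 < P i := fun i =>
    Finset.prod_pos fun j _ => Real.rpow_pos_of_pos (hx1 i j) _
  set Q : ℝ := ∏ j : C, x.2 j ^ β (Sum.inr j) with hQdef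
  have hQ : 0 < Q := Finset.prod_pos fun j _ => Real.rpow_pos_of_pos (hx2 j) _
  set a : N → ℝ := fun i => Real.exp (α i) / (P i * Q) with hadef
  have ha : ∀ i, 0 < a i := fun i => div_pos (Real.exp_pos _) (mul_pos (hP i) hQ)
  have hBx : Bfun α β x = ∑ i : N, a i := rfl
  set G := ∏ i : N, w i ^ w i with hGdef
  have hG : 0 < G := Finset.prod_pos fun i _ => Real.rpow_pos_of_pos (hw i) _
  set E := Real.exp (∑ i : N, α i * w i) with hEdef
  have hE : 0 < E := Real.exp_pos _
  set M := ∏ i : N, P i ^ w i with hMdef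
  have hM : 0 < M := Finset.prod_pos fun i _ => Real.rpow_pos_of_pos (hP i) _
  set K1L := ∏ j : L, β (Sum.inl j) ^ β (Sum.inl j) with hK1Ldef
  have hK1L : 0 < K1L := Finset.prod_pos fun j _ => Real.rpow_pos_of_pos (hβ _) _
  set K2 := ∏ j : C, β (Sum.inr j) ^ β (Sum.inr j) with hK2def
  have hK2 : 0 < K2 := Finset.prod_pos fun j _ => Real.rpow_pos_of_pos (hβ _) _
  set DL := ∏ j : L, (β (Sum.inl j) / s0 * R) ^ β (Sum.inl j) with hDLdef
  set DC := ∏ j : C, (β (Sum.inr j) / s0 * R) ^ β (Sum.inr j) with hDCdef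
  have hDL : 0 < DL := Finset.prod_pos fun j _ =>
    Real.rpow_pos_of_pos (by have := hβ (Sum.inl j); positivity) _
  have hDC : 0 < DC := Finset.prod_pos fun j _ =>
    Real.rpow_pos_of_pos (by have := hβ (Sum.inr j); positivity) _
  have hD : (∏ j : L ⊕ C, (β j / s0 * R) ^ β j) = DL * DC := Fintype.prod_sum_type _
  -- G identity : G = E ^ τ⁻¹ / W
  have hGid : G = E ^ τ⁻¹ / W := by
    have h1 : ∀ i : N, w i ^ w i = Real.exp (α i / τ * w i) / W ^ w i := by
      intro i
      rw [hwdef]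
      simp only
      rw [Real.div_rpow (Real.exp_pos _).le hW.le, ← Real.exp_mul]
    rw [hGdef]
    rw [Finset.prod_congr rfl fun i _ => h1 i, Finset.prod_div_distrib,
      ← Real.exp_sum, prod_rpow_const hW, hsw, Real.rpow_one]
    congr 1
    rw [hEdef, ← Real.exp_mul]
    congr 1
    rw [Finset.sum_mul]
    exact Finset.sum_congr rfl fun i _ => by ring
  have hGτ : G ^ τ = E / W ^ τ := by
    rw [hGid, Real.div_rpow (Real.rpow_nonneg hE.le _) hW.le, ← Real.rpow_mul hE.le,
      inv_mul_cancel₀ hτ.ne', Real.rpow_one]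
  -- Step B : AM-GM over N
  have stepB : ∏ i : N, (a i / w i) ^ w i ≤ ∑ i : N, a i := by
    have h := Real.geom_mean_le_arith_mean_weighted univ w (fun i => a i / w i)
      (fun i _ => (hw i).le) hsw (fun i _ => (div_pos (ha i) (hw i)).le)
    refine h.trans_eq (Finset.sum_congr rfl fun i _ => ?_)
    rw [mul_comm, div_mul_cancel₀ _ (hw i).ne']
  -- product formula for LHS of step B
  have hprodB : ∏ i : N, (a i / w i) ^ w i = E / ((M * Q) * G) := by
    have h1 : ∀ i : N, (a i / w i) ^ w i =
        Real.exp (α i * w i) / ((P i ^ w i * Q ^ w i) * w i ^ w i) := by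
      intro i
      rw [Real.div_rpow (ha i).le (hw i).le, hadef]
      simp only
      rw [Real.div_rpow (Real.exp_pos _).le (mul_pos (hP i) hQ).le,
        Real.mul_rpow (hP i).le hQ.le, ← Real.exp_mul, div_div]
    rw [Finset.prod_congr rfl fun i _ => h1 i, Finset.prod_div_distrib, ← Real.exp_sum]
    congr 1
    rw [Finset.prod_mul_distrib, Finset.prod_mul_distrib, prod_rpow_const hQ, hsw,
      Real.rpow_one]
  -- Step A' : the big AM-GM
  have key : M * Q ≤ (DL * DC) * G ^ bL := by
    set v : (N × L) ⊕ C → ℝ :=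
      Sum.elim (fun p => w p.1 * β (Sum.inl p.2) / s0) (fun j => β (Sum.inr j) / s0) with hvdef
    set z : (N × L) ⊕ C → ℝ :=
      Sum.elim (fun p => x.1 p.1 p.2 * s0 / (w p.1 * β (Sum.inl p.2)))
        (fun j => x.2 j * s0 / β (Sum.inr j)) with hzdef
    have hv : ∀ k, 0 < v k := by
      rintro (⟨i, j⟩ | j)
      · exact div_pos (mul_pos (hw i) (hβ _)) hs0
      · exact div_pos (hβ _) hs0
    have hz : ∀ k, 0 < z k := by
      rintro (⟨i, j⟩ | j)
      · exact div_pos (mul_pos (hx1 i j) hs0) (mul_pos (hw i) (hβ _))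
      · exact div_pos (mul_pos (hx2 j) hs0) (hβ _)
    have hvsum : ∑ k, v k = 1 := by
      rw [Fintype.sum_sum_type]
      simp only [hvdef, Sum.elim_inl, Sum.elim_inr]
      rw [Fintype.sum_prod_type]
      have h1 : ∀ i : N, ∑ j : L, w i * β (Sum.inl j) / s0 = w i * (bL / s0) := by
        intro i
        rw [← Finset.sum_div, ← Finset.mul_sum, ← hbLdef, mul_div_assoc]
      rw [Finset.sum_congr rfl fun i _ => h1 i, ← Finset.sum_mul, hsw, one_mul,
        ← Finset.sum_div, ← hbCdef, ← add_div, ← hsplit, div_self hs0.ne']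
    have hamgm : ∏ k, z k ^ v k ≤ R := by
      have h := Real.geom_mean_le_arith_mean_weighted univ v z
        (fun k _ => (hv k).le) hvsum (fun k _ => (hz k).le)
      refine h.trans ?_
      have hvz : ∑ k, v k * z k = (∑ i : N, ∑ j : L, x.1 i j) + ∑ j : C, x.2 j := by
        rw [Fintype.sum_sum_type]
        simp only [hvdef, hzdef, Sum.elim_inl, Sum.elim_inr]
        rw [Fintype.sum_prod_type]
        congr 1
        · exact Finset.sum_congr rfl fun i _ => Finset.sum_congr rfl fun j _ =>
            cancel_aux (mul_pos (hw i) (hβ _)).ne' hs0.ne'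
        · exact Finset.sum_congr rfl fun j _ =>
            cancel_aux (hβ _).ne' hs0.ne'
      rw [hvz]
      exact hbudget
    have hpow : ∏ k, z k ^ (v k * s0) ≤ R ^ s0 := by
      have h0 : (0:ℝ) ≤ ∏ k, z k ^ v k :=
        Finset.prod_nonneg fun k _ => (Real.rpow_pos_of_pos (hz k) _).le
      have h1 := Real.rpow_le_rpow h0 hamgm hs0.le
      calc ∏ k, z k ^ (v k * s0)
          = (∏ k, z k ^ v k) ^ s0 := by
            rw [← Real.finset_prod_rpow _ _ (fun k _ => (Real.rpow_pos_of_pos (hz k) _).le) s0]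
            exact Finset.prod_congr rfl fun k _ => by rw [← Real.rpow_mul (hz k).le]
        _ ≤ R ^ s0 := h1
    have hexp : ∀ k, v k * s0 =
        Sum.elim (fun p : N × L => w p.1 * β (Sum.inl p.2)) (fun j : C => β (Sum.inr j)) k := by
      rintro (⟨i, j⟩ | j)
      · simp only [hvdef, Sum.elim_inl]
        rw [div_mul_cancel₀ _ hs0.ne']
      · simp only [hvdef, Sum.elim_inr]
        rw [div_mul_cancel₀ _ hs0.ne']
    have hsplit2 : ∏ k, z k ^ (v k * s0) =
        (∏ p : N × L, (x.1 p.1 p.2 * s0 / (w p.1 * β (Sum.inl p.2))) ^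
            (w p.1 * β (Sum.inl p.2))) *
          ∏ j : C, (x.2 j * s0 / β (Sum.inr j)) ^ β (Sum.inr j) := by
      rw [Finset.prod_congr rfl fun k _ => by rw [hexp k]]
      rw [Fintype.prod_sum_type]
      simp only [Sum.elim_inl, Sum.elim_inr, hzdef]
    -- exponent sum over N × L
    have hexpsum : ∑ p : N × L, w p.1 * β (Sum.inl p.2) = bL := by
      rw [Fintype.sum_prod_type]
      have h1 : ∀ i : N, ∑ j : L, w i * β (Sum.inl j) = w i * bL := by
        intro i; rw [← Finset.mul_sum, ← hbLdef]
      rw [Finset.sum_congr rfl fun i _ => h1 i, ← Finset.sum_mul, hsw, one_mul]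
    -- M as double product
    have hMid : (∏ p : N × L, x.1 p.1 p.2 ^ (w p.1 * β (Sum.inl p.2))) = M := by
      rw [Fintype.prod_prod_type, hMdef]
      refine Finset.prod_congr rfl fun i _ => ?_
      rw [hPdef]
      simp only
      rw [← Real.finset_prod_rpow _ _ (fun j _ => (Real.rpow_pos_of_pos (hx1 i j) _).le) (w i)]
      exact Finset.prod_congr rfl fun j _ => by
        rw [← Real.rpow_mul (hx1 i j).le, mul_comm]
    -- the coefficient product over N × L
    have hK1 : (∏ p : N × L, (w p.1 * β (Sum.inl p.2)) ^ (w p.1 * β (Sum.inl p.2)))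
        = G ^ bL * K1L := by
      rw [Fintype.prod_prod_type]
      have hinner : ∀ i : N, (∏ j : L, (w i * β (Sum.inl j)) ^ (w i * β (Sum.inl j)))
          = (w i ^ w i) ^ bL * ∏ j : L, β (Sum.inl j) ^ (w i * β (Sum.inl j)) := by
        intro i
        have h2 : ∀ j : L, (w i * β (Sum.inl j)) ^ (w i * β (Sum.inl j))
            = w i ^ (w i * β (Sum.inl j)) * β (Sum.inl j) ^ (w i * β (Sum.inl j)) :=
          fun j => Real.mul_rpow (hw i).le (hβ _).le
        rw [Finset.prod_congr rfl fun j _ => h2 j, Finset.prod_mul_distrib,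
          prod_rpow_const (hw i), ← Finset.mul_sum, ← hbLdef, Real.rpow_mul (hw i).le]
      rw [Finset.prod_congr rfl fun i _ => hinner i, Finset.prod_mul_distrib,
        Real.finset_prod_rpow _ _ (fun i _ => (Real.rpow_pos_of_pos (hw i) _).le) bL,
        ← hGdef]
      congr 1
      rw [Finset.prod_comm, hK1Ldef]
      refine Finset.prod_congr rfl fun j _ => ?_
      rw [prod_rpow_const (hβ _), ← Finset.sum_mul, hsw, one_mul]
    -- part over N × L
    have hPL : (∏ p : N × L, (x.1 p.1 p.2 * s0 / (w p.1 * β (Sum.inl p.2))) ^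
          (w p.1 * β (Sum.inl p.2)))
        = M * s0 ^ bL / (G ^ bL * K1L) := by
      have h2 : ∀ p : N × L, (x.1 p.1 p.2 * s0 / (w p.1 * β (Sum.inl p.2))) ^
            (w p.1 * β (Sum.inl p.2))
          = x.1 p.1 p.2 ^ (w p.1 * β (Sum.inl p.2)) * s0 ^ (w p.1 * β (Sum.inl p.2)) /
            (w p.1 * β (Sum.inl p.2)) ^ (w p.1 * β (Sum.inl p.2)) := by
        intro p
        rw [Real.div_rpow (mul_pos (hx1 p.1 p.2) hs0).le (mul_pos (hw p.1) (hβ _)).le,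
          Real.mul_rpow (hx1 p.1 p.2).le hs0.le]
      rw [Finset.prod_congr rfl fun p _ => h2 p, Finset.prod_div_distrib,
        Finset.prod_mul_distrib, hMid, hK1, prod_rpow_const hs0, hexpsum]
    -- part over C
    have hPC : (∏ j : C, (x.2 j * s0 / β (Sum.inr j)) ^ β (Sum.inr j))
        = Q * s0 ^ bC / K2 := by
      have h2 : ∀ j : C, (x.2 j * s0 / β (Sum.inr j)) ^ β (Sum.inr j)
          = x.2 j ^ β (Sum.inr j) * s0 ^ β (Sum.inr j) / β (Sum.inr j) ^ β (Sum.inr j) := by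
        intro j
        rw [Real.div_rpow (mul_pos (hx2 j) hs0).le (hβ _).le,
          Real.mul_rpow (hx2 j).le hs0.le]
      rw [Finset.prod_congr rfl fun j _ => h2 j, Finset.prod_div_distrib,
        Finset.prod_mul_distrib, ← hQdef, ← hK2def, prod_rpow_const hs0, ← hbCdef]
    -- positivity facts
    have hs0bL : (0:ℝ) < s0 ^ bL := Real.rpow_pos_of_pos hs0 _
    have hs0bC : (0:ℝ) < s0 ^ bC := Real.rpow_pos_of_pos hs0 _
    have hs0s0 : (0:ℝ) < s0 ^ s0 := Real.rpow_pos_of_pos hs0 _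
    have hGbL : (0:ℝ) < G ^ bL := Real.rpow_pos_of_pos hG _
    -- rewrite hpow
    rw [hsplit2, hPL, hPC] at hpow
    -- identities for DL, DC
    have hDLid : DL = K1L * (R / s0) ^ bL := by
      rw [hDLdef, hK1Ldef]
      have h2 : ∀ j : L, (β (Sum.inl j) / s0 * R) ^ β (Sum.inl j)
          = β (Sum.inl j) ^ β (Sum.inl j) * (R / s0) ^ β (Sum.inl j) := by
        intro j
        rw [show β (Sum.inl j) / s0 * R = β (Sum.inl j) * (R / s0) by ring,
          Real.mul_rpow (hβ _).le (div_pos hR hs0).le]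
      rw [Finset.prod_congr rfl fun j _ => h2 j, Finset.prod_mul_distrib,
        prod_rpow_const (div_pos hR hs0), ← hbLdef]
    have hDCid : DC = K2 * (R / s0) ^ bC := by
      rw [hDCdef, hK2def]
      have h2 : ∀ j : C, (β (Sum.inr j) / s0 * R) ^ β (Sum.inr j)
          = β (Sum.inr j) ^ β (Sum.inr j) * (R / s0) ^ β (Sum.inr j) := by
        intro j
        rw [show β (Sum.inr j) / s0 * R = β (Sum.inr j) * (R / s0) by ring,
          Real.mul_rpow (hβ _).le (div_pos hR hs0).le]
      rw [Finset.prod_congr rfl fun j _ => h2 j, Finset.prod_mul_distrib,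
        prod_rpow_const (div_pos hR hs0), ← hbCdef]
    have hRs0 : (R / s0) ^ bL * (R / s0) ^ bC = R ^ s0 / s0 ^ s0 := by
      rw [← Real.rpow_add (div_pos hR hs0), ← hsplit,
        Real.div_rpow hR.le hs0.le]
    have hs0split : s0 ^ bL * s0 ^ bC = s0 ^ s0 := by
      rw [← Real.rpow_add hs0, ← hsplit]
    -- final computation
    have hineq : M * Q * s0 ^ s0 ≤ R ^ s0 * (G ^ bL * K1L * K2) := by
      have h3 : M * s0 ^ bL / (G ^ bL * K1L) * (Q * s0 ^ bC / K2)
          = M * Q * s0 ^ s0 / (G ^ bL * K1L * K2) := by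
        rw [div_mul_div_comm, ← hs0split]
        ring_nf
      rw [h3] at hpow
      calc M * Q * s0 ^ s0
          = M * Q * s0 ^ s0 / (G ^ bL * K1L * K2) * (G ^ bL * K1L * K2) := by
            rw [div_mul_cancel₀ _ (mul_pos (mul_pos hGbL hK1L) hK2).ne']
        _ ≤ R ^ s0 * (G ^ bL * K1L * K2) :=
            mul_le_mul_of_nonneg_right hpow (mul_pos (mul_pos hGbL hK1L) hK2).le
    have hgoal : (DL * DC) * G ^ bL = R ^ s0 * (G ^ bL * K1L * K2) / s0 ^ s0 := by
      rw [hDLid, hDCid]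
      rw [show K1L * (R / s0) ^ bL * (K2 * (R / s0) ^ bC) * G ^ bL
          = (R / s0) ^ bL * (R / s0) ^ bC * (G ^ bL * K1L * K2) by ring, hRs0]
      ring
    rw [hgoal, le_div_iff₀ hs0s0]
    exact hineq
  -- conclude
  rw [hBx, hD]
  refine le_trans ?_ stepB
  rw [hprodB]
  have hMQG : (M * Q) * G ≤ ((DL * DC) * G ^ bL) * G :=
    mul_le_mul_of_nonneg_right key hG.le
  have hfin : ((DL * DC) * G ^ bL) * G = (DL * DC) * G ^ τ := by
    rw [hτdef, add_comm (1:ℝ) bL, Real.rpow_add_one hG.ne', mul_assoc]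
  have hWτ : (0:ℝ) < W ^ τ := Real.rpow_pos_of_pos hW _
  have hGτpos : (0:ℝ) < G ^ τ := Real.rpow_pos_of_pos hG _
  calc W ^ τ / (DL * DC) = E / ((DL * DC) * G ^ τ) := by
        rw [hGτ, div_eq_div_iff (mul_pos hDL hDC).ne'
          (mul_pos (mul_pos hDL hDC) (div_pos hE hWτ)).ne']
        calc W ^ τ * ((DL * DC) * (E / W ^ τ))
            = (W ^ τ / W ^ τ) * ((DL * DC) * E) := by ring
          _ = E * (DL * DC) := by rw [div_self hWτ.ne']; ring
    _ ≤ E / ((M * Q) * G) := by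
        refine (div_le_div_iff_of_pos_left hE (mul_pos (mul_pos hDL hDC) hGτpos)
          (mul_pos (mul_pos hM hQ) hG)).mpr ?_
        rw [← hfin]; exact hMQG

private lemma Bfun_pos (α : N → ℝ) (β : L ⊕ C → ℝ) (x : (N → L → ℝ) × (C → ℝ))
    (hx : PosAlloc x) : 0 < Bfun α β x := by
  refine Finset.sum_pos (fun i _ => ?_) univ_nonempty
  have h1 : (0:ℝ) < ∏ j : L, x.1 i j ^ β (Sum.inl j) :=
    Finset.prod_pos fun j _ => Real.rpow_pos_of_pos (hx.1 i j) _
  have h2 : (0:ℝ) < ∏ j : C, x.2 j ^ β (Sum.inr j) :=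
    Finset.prod_pos fun j _ => Real.rpow_pos_of_pos (hx.2 j) _
  positivity

end main

theorem stmt_10 {N L C : Type*} [Fintype N] [Fintype L] [Fintype C]
    [Nonempty N] [Nonempty (L ⊕ C)]
    (R : ℝ) (hR : 0 < R) (α : N → ℝ) (hα : ∀ i, 0 ≤ α i)
    (β : L ⊕ C → ℝ) (hβ : ∀ j, 0 < β j) :
    FeasAlloc R (xstar R α β) ∧
    ∀ x : (N → L → ℝ) × (C → ℝ), FeasAlloc R x →
      Pfun α β (xstar R α β) ≤ Pfun α β x := by
  refine ⟨xstar_feas R hR α β hβ, fun x hx => ?_⟩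
  have hle : Bfun α β (xstar R α β) ≤ Bfun α β x := by
    rw [xstar_value R hR α β hβ]
    exact lower_bound R hR α β hβ x hx
  have h1 : 0 < Bfun α β (xstar R α β) :=
    Bfun_pos α β _ (xstar_feas R hR α β hβ).1
  have h2 : 0 < Bfun α β x := Bfun_pos α β x hx.1
  unfold Pfun
  rw [div_le_div_iff₀ (by linarith) (by linarith)]
  nlinarith
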